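/- Let G be a finite simple graph with a perfect matching M such that (i) no edge of M lies in a triangle of G, and (ii) whenever an edge of M is the central edge of a path of length 3 in G, the two endpoints of that path are adjacent in G. Then every maximal independent set of G has cardinality |V(G)|/2. -/

import Mathlib

/-- `M` is a perfect matching of `G`, viewed as a set of edges: every edge of `M` is an
edge of `G`, and every vertex belongs to exactly one edge of `M`. -/
def IsPerfectMatchingEdges {V : Type*} (G : SimpleGraph V) (M : Set (Sym2 V)) : Prop :=
  M ⊆ G.edgeSet ∧ ∀ v : V, ∃! e, e ∈ M ∧ v ∈ e

/-- `s` is an independent set of `G`. -/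
def IsIndepSet' {V : Type*} (G : SimpleGraph V) (s : Set V) : Prop :=
  s.Pairwise fun a b => ¬ G.Adj a b

/-- Let `G` be a finite simple graph, without isolated vertices, on an even number of
vertices, with a perfect matching `M` such that (i) no edge of `M` lies in a triangle of
`G`, and (ii) whenever an edge of `M` is the central edge of a path of length `3` in `G`,
the two endpoints of that path are adjacent in `G`.  Then every maximal independent set
of `G` has cardinality `|V(G)|/2`. -/
theorem very_well_covered_of_matching {V : Type*} [Fintype V] (G : SimpleGraph V)
    (hiso : ∀ v : V, ∃ w, G.Adj v w) (heven : Even (Fintype.card V))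
    (M : Set (Sym2 V)) (hM : IsPerfectMatchingEdges G M)
    (htri : ∀ a b w : V, s(a, b) ∈ M → ¬ (G.Adj a w ∧ G.Adj b w))
    (hpath : ∀ z a b w : V, s(a, b) ∈ M → G.Adj z a → G.Adj b w →
      z ≠ w → z ≠ b → w ≠ a → G.Adj z w) :
    ∀ s : Set V, Maximal (IsIndepSet' G) s → s.ncard = Fintype.card V / 2 := by
  classical
  -- partner function
  have hex : ∀ v : V, ∃ w, s(v, w) ∈ M ∧ G.Adj v w := by
    intro v
    obtain ⟨e, ⟨heM, hve⟩, -⟩ := hM.2 v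
    obtain ⟨w, rfl⟩ : ∃ w, e = s(v, w) := by
      induction e using Sym2.ind with
      | _ x y =>
        rcases Sym2.mem_iff.mp hve with rfl | rfl
        · exact ⟨y, rfl⟩
        · exact ⟨x, Sym2.eq_swap⟩
    exact ⟨w, heM, (G.mem_edgeSet).1 (hM.1 heM)⟩
  set p : V → V := fun v => (hex v).choose with hp
  have hpM : ∀ v, s(v, p v) ∈ M := fun v => (hex v).choose_spec.1
  have hpadj : ∀ v, G.Adj v (p v) := fun v => (hex v).choose_spec.2
  have hpp : ∀ v, p (p v) = v := by
    intro v
    obtain ⟨e, -, huniq⟩ := hM.2 (p v)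
    have h1 : s(p v, p (p v)) = e := huniq _ ⟨hpM (p v), Sym2.mem_mk_left _ _⟩
    have h2 : s(p v, v) = e := by
      refine huniq _ ⟨?_, Sym2.mem_mk_left _ _⟩
      rw [Sym2.eq_swap]; exact hpM v
    exact Sym2.congr_right.mp (h1.trans h2.symm)
  have hpinj : Function.Injective p := Function.LeftInverse.injective hpp
  intro s hs
  have hsind : IsIndepSet' G s := hs.1
  -- key: v ∈ s ↔ p v ∉ s
  have key : ∀ v : V, v ∉ s → p v ∈ s := by
    intro a ha
    by_contra hb
    set b := p a with hbdef
    -- insert a s is not independent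
    have hnind : ∀ c : V, c ∉ s → ∃ z ∈ s, G.Adj c z := by
      intro c hc
      by_contra hno
      push_neg at hno
      have : IsIndepSet' G (insert c s) := by
        apply fun (hs : s.Pairwise fun a b => ¬G.Adj a b) (hsy : Symmetric fun a b => ¬G.Adj a b) (h : ∀ z ∈ s, c ≠ z → ¬G.Adj c z) => by
          haveI : Std.Symm (fun a b => ¬G.Adj a b) := ⟨fun a b h => hsy h⟩
          exact hs.insert_of_symm h
        · exact hsind
        · intro x y hxy
          exact fun h => hxy (G.adj_symm h)
        · intro z hz _
          exact hno z hz
      have := hs.2 this (Set.subset_insert c s)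
      exact hc (this (Set.mem_insert c s))
    obtain ⟨z, hzs, hza⟩ := hnind a ha
    obtain ⟨w, hws, hwb⟩ := hnind b hb
    have hzw : z ≠ w := by
      rintro rfl
      exact htri a b z (hpM a) ⟨hza, hwb⟩
    have hzb : z ≠ b := fun h => hb (h ▸ hzs)
    have hwa : w ≠ a := fun h => ha (h ▸ hws)
    have : G.Adj z w := hpath z a b w (hpM a) (G.adj_symm hza) hwb hzw hzb hwa
    exact hsind hzs hws hzw this
  have himg : p '' s = sᶜ := by
    ext u
    constructor
    · rintro ⟨v, hv, rfl⟩
      intro hpu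
      exact hsind hv hpu (G.ne_of_adj (hpadj v)) (hpadj v)
    · intro hu
      exact ⟨p u, key u hu, hpp u⟩
  have hcard : s.ncard = sᶜ.ncard := by
    rw [← himg, Set.ncard_image_of_injective _ hpinj]
  have htot : s.ncard + sᶜ.ncard = Fintype.card V := by
    rw [Set.ncard_add_ncard_compl, Nat.card_eq_fintype_card]
  omega
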